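/- For every compact subset K of M, the partially holomorphic hull K̂_M is contained in the fibrewise convex hull of K; that is, K̂_M ⊆ {(ξ, z) ∈ M : z belongs to the convex hull (over ℝ) of the slice {w ∈ ℂⁿ : (ξ, w) ∈ K}}. -/

import Mathlib

open scoped Manifold

open Set


private lemma mySumExtend {M : Type*} [AddCommMonoid M] {α : Type*} [DecidableEq α]
    (t : Finset α) {d : ℕ} (hcard : t.card ≤ d) (e : ↥t ≃ Fin t.card) (f : α → M) :
    (∑ j : Fin d, if h : (j : ℕ) < t.card then f ((e.symm ⟨j, h⟩ : α)) else 0)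
      = ∑ y ∈ t, f y := by
  have hzero : ∀ j ∈ (Finset.univ : Finset (Fin d)),
      j ∉ (Finset.univ : Finset (Fin t.card)).map (Fin.castLEEmb hcard) →
      (if h : (j : ℕ) < t.card then f ((e.symm ⟨j, h⟩ : α)) else 0) = 0 := by
    intro j _ hj
    rw [dif_neg]
    intro hjt
    exact hj (by
      simp only [Finset.mem_map, Finset.mem_univ, Fin.castLEEmb_apply, true_and]
      exact ⟨⟨j, hjt⟩, by ext; simp⟩)
  rw [← Finset.sum_subset (Finset.subset_univ _) hzero, Finset.sum_map]
  have h2 : ∀ k : Fin t.card,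
      (if h : ((Fin.castLEEmb hcard k : Fin d) : ℕ) < t.card then
        f ((e.symm ⟨(Fin.castLEEmb hcard k : Fin d), h⟩ : α)) else 0)
      = f ((e.symm k : α)) := by
    intro k
    have hk : ((Fin.castLEEmb hcard k : Fin d) : ℕ) < t.card := by simp
    have hkk : (⟨((Fin.castLEEmb hcard k : Fin d) : ℕ), hk⟩ : Fin t.card) = k := by
      ext; simp
    rw [dif_pos hk, hkk]
  rw [Finset.sum_congr rfl fun k _ => h2 k,
    Equiv.sum_comp e.symm (fun y : ↥t => f (y : α)), Finset.sum_coe_sort t f]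

theorem myIsCompact_convexHull {E : Type*} [NormedAddCommGroup E] [NormedSpace ℝ E]
    [FiniteDimensional ℝ E] {s : Set E} (hs : IsCompact s) : IsCompact (convexHull ℝ s) := by
  rcases s.eq_empty_or_nonempty with rfl | ⟨x₀, hx₀⟩
  · simp [convexHull_empty, isCompact_empty]
  set d := Module.finrank ℝ E + 1 with hd
  have hg : Continuous fun q : (Fin d → ℝ) × (Fin d → E) => ∑ j, q.1 j • q.2 j :=
    continuous_finset_sum _ fun i _ =>
      ((continuous_apply i).comp continuous_fst).smul ((continuous_apply i).comp continuous_snd)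
  have key : convexHull ℝ s = (fun q : (Fin d → ℝ) × (Fin d → E) => ∑ j, q.1 j • q.2 j) ''
      ((stdSimplex ℝ (Fin d)) ×ˢ (Set.univ.pi fun _ => s)) := by
    apply Set.Subset.antisymm
    · intro x hx
      set t := Caratheodory.minCardFinsetOfMemConvexHull hx with htdef
      have hts : ↑t ⊆ s := Caratheodory.minCardFinsetOfMemConvexHull_subseteq hx
      have hxt : x ∈ convexHull ℝ (↑t : Set E) :=
        Caratheodory.mem_minCardFinsetOfMemConvexHull hx
      have hcard : t.card ≤ d := by
        have h1 := (Caratheodory.affineIndependent_minCardFinsetOfMemConvexHull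
          hx).card_le_finrank_succ
        rw [Fintype.card_coe] at h1
        exact h1.trans (Nat.succ_le_succ (Submodule.finrank_le _))
      rw [Finset.convexHull_eq] at hxt
      obtain ⟨w, hw0, hw1, hwx⟩ := hxt
      rw [Finset.centerMass_eq_of_sum_1 _ _ hw1] at hwx
      set e : ↥t ≃ Fin t.card := Fintype.equivFinOfCardEq (Fintype.card_coe t) with he
      classical
      refine ⟨(fun j => if h : (j : ℕ) < t.card then w ((e.symm ⟨j, h⟩ : E)) else 0,
               fun j => if h : (j : ℕ) < t.card then ((e.symm ⟨j, h⟩ : E)) else x₀),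
              ⟨⟨fun j => ?_, ?_⟩, fun j _ => ?_⟩, ?_⟩
      · dsimp only
        split
        · exact hw0 _ (Finset.coe_mem _)
        · exact le_refl 0
      · exact (mySumExtend t hcard e w).trans hw1
      · dsimp only
        split
        · exact hts (Finset.coe_mem _)
        · exact hx₀
      · dsimp only
        have hterm : ∀ j : Fin d,
            (if h : (j : ℕ) < t.card then w ((e.symm ⟨j, h⟩ : E)) else 0) •
              (if h : (j : ℕ) < t.card then ((e.symm ⟨j, h⟩ : E)) else x₀)
            = if h : (j : ℕ) < t.card then w ((e.symm ⟨j, h⟩ : E)) • ((e.symm ⟨j, h⟩ : E))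
              else 0 := by
          intro j
          by_cases h : (j : ℕ) < t.card <;> simp [h]
        rw [Finset.sum_congr rfl fun j _ => hterm j, mySumExtend t hcard e (fun y => w y • y)]
        simpa using hwx
    · rintro x ⟨⟨wq, pq⟩, ⟨hwq, hpq⟩, rfl⟩
      exact (convex_convexHull ℝ s).sum_mem (fun i _ => hwq.1 i) hwq.2
        fun i _ => subset_convexHull ℝ s (hpq i (Set.mem_univ i))
  rw [key]
  exact (((isCompact_stdSimplex _ _).prod (isCompact_univ_pi fun _ => hs)).image hg)

noncomputable def myCLin {n : ℕ} (ℓ : (Fin n → ℂ) →L[ℝ] ℝ) : (Fin n → ℂ) →ₗ[ℂ] ℂ where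
  toFun z := (ℓ z : ℂ) - Complex.I * (ℓ (Complex.I • z) : ℂ)
  map_add' a b := by
    simp only [smul_add, map_add, Complex.ofReal_add]
    ring
  map_smul' a z := by
    have h1 : a • z = (a.re : ℝ) • z + (a.im : ℝ) • (Complex.I • z) := by
      ext i
      simp only [Pi.add_apply, Pi.smul_apply, smul_eq_mul, Complex.real_smul]
      linear_combination (-z i) * Complex.re_add_im a
    have h2 : Complex.I • (a • z) = (a.re : ℝ) • (Complex.I • z) - (a.im : ℝ) • z := by
      ext i
      simp only [Pi.sub_apply, Pi.smul_apply, smul_eq_mul, Complex.real_smul]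
      linear_combination (-Complex.I * z i) * Complex.re_add_im a + z i * (a.im:ℂ) * Complex.I_sq
    simp only [RingHom.id_apply]
    rw [h2, h1]
    simp only [map_add, map_sub, map_smul, smul_eq_mul]
    push_cast
    linear_combination ((ℓ z : ℂ) - Complex.I * (ℓ (Complex.I • z) : ℂ)) * Complex.re_add_im a
      + (a.im : ℂ) * (ℓ (Complex.I • z) : ℂ) * Complex.I_sq

theorem myCLin_re {n : ℕ} (ℓ : (Fin n → ℂ) →L[ℝ] ℝ) (z : Fin n → ℂ) :
    (myCLin ℓ z).re = ℓ z := by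
  simp [myCLin, Complex.sub_re, Complex.mul_re]

theorem myCLin_apply {n : ℕ} (ℓ : (Fin n → ℂ) →L[ℝ] ℝ) (z : Fin n → ℂ) :
    myCLin ℓ z = (ℓ z : ℂ) - Complex.I * (ℓ (Complex.I • z) : ℂ) := rfl

open scoped Manifold

instance mySmoothRingC : ContMDiffRing 𝓘(ℝ, ℂ) (⊤ : ℕ∞) ℂ where
  contMDiff_add := by
    rw [← modelWithCornersSelf_prod, chartedSpaceSelf_prod]
    exact (contDiff_fst.add contDiff_snd).contMDiff
  contMDiff_mul := by
    rw [← modelWithCornersSelf_prod, chartedSpaceSelf_prod]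
    exact (contDiff_fst.mul contDiff_snd).contMDiff


/-- For every compact subset `K` of `M`, the partially holomorphic hull of `K` in `M` is
contained in the fibrewise convex hull of `K`. Here `Ξ` is a finite-dimensional smooth real
manifold (Hausdorff, second countable), `M` is an open subset of `Ξ × ℂⁿ`, and a partially
holomorphic function on `M` is a smooth function `f : M → ℂ` which is holomorphic in the
second variable on each slice. -/
theorem stmt_0
    {E : Type*} [NormedAddCommGroup E] [NormedSpace ℝ E] [FiniteDimensional ℝ E]
    {H : Type*} [TopologicalSpace H] (I : ModelWithCorners ℝ E H)
    {Ξ : Type*} [TopologicalSpace Ξ] [ChartedSpace H Ξ]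
    [IsManifold I (⊤ : ℕ∞) Ξ] [T2Space Ξ] [SecondCountableTopology Ξ]
    (n : ℕ) (M : Set (Ξ × (Fin n → ℂ))) (hM : IsOpen M)
    (K : Set (Ξ × (Fin n → ℂ))) (hK : IsCompact K) (hKM : K ⊆ M) :
    {x | x ∈ M ∧ ∀ f : Ξ × (Fin n → ℂ) → ℂ,
        ContMDiffOn (I.prod 𝓘(ℝ, Fin n → ℂ)) 𝓘(ℝ, ℂ) (⊤ : ℕ∞) f M →
        (∀ ξ : Ξ, DifferentiableOn ℂ (fun z => f (ξ, z)) {z | (ξ, z) ∈ M}) →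
        ‖f x‖ ≤ sSup ((fun y => ‖f y‖) '' K)}
      ⊆ {x | x ∈ M ∧ x.2 ∈ convexHull ℝ {w | (x.1, w) ∈ K}} := by
  intro x hx
  obtain ⟨hxM, hxf⟩ := hx
  refine ⟨hxM, ?_⟩
  by_contra hx2
  -- the slice of `K` over `x.1`
  set S : Set (Fin n → ℂ) := {w | (x.1, w) ∈ K} with hSdef
  have hKclosed : IsClosed K := hK.isClosed
  have hSclosed : IsClosed S := hKclosed.preimage (Continuous.prodMk_right x.1)
  have hSsub : S ⊆ Prod.snd '' K := fun w hw => ⟨(x.1, w), hw, rfl⟩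
  have hScompact : IsCompact S := (hK.image continuous_snd).of_isClosed_subset hSclosed hSsub
  have hhull : IsCompact (convexHull ℝ S) := myIsCompact_convexHull hScompact
  obtain ⟨ℓ, u, hsep, hu⟩ :=
    geometric_hahn_banach_closed_point (convex_convexHull ℝ S) hhull.isClosed hx2
  -- a smooth bump function on `Ξ`
  haveI : LocallyCompactSpace Ξ := Manifold.locallyCompact_of_finiteDimensional I
  set T : Set Ξ := Prod.fst '' (K ∩ {p | u ≤ ℓ p.2}) with hTdef
  have hTcompact : IsCompact T :=
    (hK.inter_right (isClosed_le continuous_const (ℓ.continuous.comp continuous_snd))).image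
      continuous_fst
  have hxT : x.1 ∉ T := by
    rintro ⟨p, ⟨hpK, hpu⟩, hp1⟩
    have hmem : p.2 ∈ S := by
      have : (x.1, p.2) ∈ K := by rw [← hp1]; exact hpK
      exact this
    exact absurd hpu (not_le.2 (hsep _ (subset_convexHull ℝ S hmem)))
  obtain ⟨φ, hφ0, hφ1, hφ01⟩ := exists_contMDiffMap_zero_one_of_isClosed (n := ⊤) I hTcompact.isClosed
    isClosed_singleton (Set.disjoint_singleton_right.2 hxT)
  -- the partially holomorphic function
  set G := (myCLin ℓ).toContinuousLinearMap with hGdef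
  set F : Ξ × (Fin n → ℂ) → ℂ := fun p => ((φ p.1 : ℝ) : ℂ) * Complex.exp (G p.2) with hFdef
  have h1 : ContMDiff (I.prod 𝓘(ℝ, Fin n → ℂ)) 𝓘(ℝ, ℂ) (⊤ : ℕ∞)
      fun p : Ξ × (Fin n → ℂ) => ((φ p.1 : ℝ) : ℂ) :=
    (Complex.ofRealCLM.contDiff.contMDiff).comp (φ.contMDiff.comp contMDiff_fst)
  have h2 : ContMDiff (I.prod 𝓘(ℝ, Fin n → ℂ)) 𝓘(ℝ, ℂ) (⊤ : ℕ∞)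
      fun p : Ξ × (Fin n → ℂ) => Complex.exp (G p.2) :=
    (((G.contDiff.cexp).restrict_scalars ℝ).contMDiff).comp contMDiff_snd
  have hsmooth : ContMDiff (I.prod 𝓘(ℝ, Fin n → ℂ)) 𝓘(ℝ, ℂ) (⊤ : ℕ∞) F := h1.mul h2
  have hdiff : ∀ ξ : Ξ, DifferentiableOn ℂ (fun z => F (ξ, z)) {z | (ξ, z) ∈ M} := by
    intro ξ
    have hrfl : (fun z => F (ξ, z)) = fun z : Fin n → ℂ =>
        ((φ ξ : ℝ) : ℂ) * Complex.exp (G z) := rfl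
    rw [hrfl]
    exact ((differentiable_const _).mul (G.differentiable.cexp)).differentiableOn
  have habs : ∀ p : Ξ × (Fin n → ℂ), ‖F p‖ = |φ p.1| * Real.exp (ℓ p.2) := by
    intro p
    rw [hFdef]
    dsimp only
    rw [norm_mul, Complex.norm_real, Real.norm_eq_abs, Complex.norm_exp]
    congr 2
    exact myCLin_re ℓ p.2
  have hFx : ‖F x‖ = Real.exp (ℓ x.2) := by
    rw [habs x, hφ1 (Set.mem_singleton x.1)]
    norm_num
  have hbound : sSup ((fun y => ‖F y‖) '' K) ≤ Real.exp u := by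
    apply Real.sSup_le
    · rintro r ⟨y, hyK, rfl⟩
      show ‖F y‖ ≤ Real.exp u
      rw [habs y]
      by_cases h : u ≤ ℓ y.2
      · have hyT : y.1 ∈ T := ⟨y, ⟨hyK, h⟩, rfl⟩
        rw [hφ0 hyT]
        simpa using (Real.exp_pos u).le
      · have hφle : |φ y.1| ≤ 1 := by
          rw [abs_of_nonneg (hφ01 y.1).1]
          exact (hφ01 y.1).2
        calc |φ y.1| * Real.exp (ℓ y.2) ≤ 1 * Real.exp u :=
              mul_le_mul hφle (Real.exp_le_exp.2 (le_of_not_ge h)) (Real.exp_pos _).le zero_le_one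
          _ = Real.exp u := one_mul _
    · exact (Real.exp_pos u).le
  have hle := hxf F hsmooth.contMDiffOn hdiff
  rw [hFx] at hle
  exact absurd (hle.trans hbound) (not_le.2 (Real.exp_lt_exp.2 hu))
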